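/- With α₁(r) = −J₀'(r)/r and α₂(r) = −J₀''(r), the product (α₁(r)² − 1/4)(α₂(r)² − 1/4) equals 3r⁴/256 + O(r⁶) as r → 0. -/

import Mathlib

open Real Filter Asymptotics Topology

/-- The Bessel function of the first kind of order zero, defined by its power series. -/
noncomputable def besselJ0 (x : ℝ) : ℝ :=
  ∑' n : ℕ, (-1) ^ n / ((Nat.factorial n : ℝ)) ^ 2 * (x / 2) ^ (2 * n)

namespace DetAAux

/-- Coefficients of the entire function `f` with `besselJ0 x = f (x^2)`. -/
noncomputable def c : ℕ → ℝ := fun n => (-1/4 : ℝ) ^ n / (Nat.factorial n : ℝ) ^ 2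

lemma c_ne_zero (n : ℕ) : c n ≠ 0 := by
  have h1 : ((-1:ℝ)/4) ≠ 0 := by norm_num
  have h2 : ((Nat.factorial n : ℝ)) ≠ 0 := Nat.cast_ne_zero.2 (Nat.factorial_ne_zero n)
  exact div_ne_zero (pow_ne_zero _ h1) (pow_ne_zero _ h2)

lemma norm_c (n : ℕ) : ‖c n‖ = (1/4 : ℝ) ^ n / (Nat.factorial n : ℝ) ^ 2 := by
  have h2 : (0:ℝ) < (Nat.factorial n : ℝ) ^ 2 := by
    positivity
  rw [c, Real.norm_eq_abs, abs_div, abs_pow, abs_pow,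
    abs_of_pos (by positivity : (0:ℝ) < (Nat.factorial n : ℝ)),
    show |(-1/4 : ℝ)| = 1/4 by norm_num]

/-- The formal power series of `f`. -/
noncomputable def p : FormalMultilinearSeries ℝ ℝ ℝ := FormalMultilinearSeries.ofScalars ℝ c

lemma p_radius : p.radius = ⊤ := by
  apply FormalMultilinearSeries.ofScalars_radius_eq_top_of_tendsto
  · exact Eventually.of_forall c_ne_zero
  · have hkey : ∀ n : ℕ, ‖c n.succ‖ / ‖c n‖ = (1/4 : ℝ) * (1/((n:ℝ)+1)) ^ 2 := by
      intro n
      rw [norm_c, norm_c, Nat.factorial_succ]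
      have h1 : ((n:ℝ)+1) ≠ 0 := by positivity
      have h2 : ((Nat.factorial n : ℝ)) ≠ 0 := Nat.cast_ne_zero.2 (Nat.factorial_ne_zero n)
      push_cast
      field_simp
      rw [Nat.succ_eq_add_one, pow_succ]
      ring
    have : Tendsto (fun n : ℕ => (1/4 : ℝ) * (1/((n:ℝ)+1)) ^ 2) atTop (𝓝 ((1/4) * 0 ^ 2)) :=
      (tendsto_one_div_add_atTop_nhds_zero_nat.pow 2).const_mul (1/4)
    simp only [hkey]
    simpa using this

/-- The entire function with `besselJ0 x = f (x^2)`. -/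
noncomputable def f : ℝ → ℝ := p.sum

lemma hfball : HasFPowerSeriesOnBall f p 0 ⊤ := by
  have := p.hasFPowerSeriesOnBall (by rw [p_radius]; exact ENNReal.zero_lt_top)
  rwa [p_radius] at this

lemma hfa : AnalyticOnNhd ℝ f Set.univ := fun y _ =>
  hfball.analyticAt_of_mem (by simp)

noncomputable def a : ℝ → ℝ := deriv f
noncomputable def b : ℝ → ℝ := deriv a

lemma hfa' : AnalyticOnNhd ℝ a Set.univ := hfa.deriv
lemma hfa'' : AnalyticOnNhd ℝ b Set.univ := hfa'.deriv

lemma besselJ0_eq : besselJ0 = fun x => f (x ^ 2) := by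
  funext x
  rw [besselJ0]
  have hsum : f (x ^ 2) = ∑' n : ℕ, p n (fun _ => x ^ 2) := rfl
  rw [hsum]
  refine tsum_congr fun n => ?_
  rw [show p n = FormalMultilinearSeries.ofScalars ℝ c n from rfl,
    FormalMultilinearSeries.ofScalars_apply_eq, c, smul_eq_mul, pow_mul,
    show ((x/2)^2 : ℝ) = x^2 * (4:ℝ)⁻¹ by ring, mul_pow,
    show (-1/4 : ℝ) = (-1) * (4:ℝ)⁻¹ by norm_num, mul_pow]
  ring

lemma hDa (x : ℝ) : HasDerivAt f (a x) x :=
  ((hfa x trivial).differentiableAt).hasDerivAt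

lemma hDb (x : ℝ) : HasDerivAt a (b x) x :=
  ((hfa' x trivial).differentiableAt).hasDerivAt

lemma sq_hasDerivAt (r : ℝ) : HasDerivAt (fun x : ℝ => x ^ 2) (2 * r) r := by
  simpa using hasDerivAt_pow 2 r

lemma hJ0deriv : deriv besselJ0 = fun r => a (r ^ 2) * (2 * r) := by
  rw [besselJ0_eq]
  funext r
  exact ((hDa (r ^ 2)).comp r (sq_hasDerivAt r)).deriv

lemma hJ0deriv2 :
    deriv (deriv besselJ0) = fun r => b (r ^ 2) * (2 * r) * (2 * r) + a (r ^ 2) * 2 := by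
  rw [hJ0deriv]
  funext r
  have h3 : HasDerivAt (fun x : ℝ => a (x ^ 2)) (b (r ^ 2) * (2 * r)) r :=
    (hDb (r ^ 2)).comp r (sq_hasDerivAt r)
  have h4 : HasDerivAt (fun x : ℝ => 2 * x) 2 r := by
    simpa using (hasDerivAt_id r).const_mul 2
  exact (h3.mul h4).deriv

lemma a0 : a 0 = -(1/4) := by
  have h := hfball.hasFPowerSeriesAt.deriv
  have hp1 : (p 1 fun _ => (1:ℝ)) = c 1 := by
    rw [show p 1 = FormalMultilinearSeries.ofScalars ℝ c 1 from rfl,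
      FormalMultilinearSeries.ofScalars_apply_eq]
    simp
  rw [a, h, hp1, c]
  norm_num [Nat.factorial]

lemma b0 : b 0 = 1/32 := by
  have h := hfball.factorial_smul (1:ℝ) 2
  have hleft : ((2:ℕ).factorial) • (p 2 fun _ => (1:ℝ)) = 2 * c 2 := by
    rw [show p 2 = FormalMultilinearSeries.ofScalars ℝ c 2 from rfl,
      FormalMultilinearSeries.ofScalars_apply_eq]
    simp [Nat.factorial]
  have hright : iteratedFDeriv ℝ 2 f 0 (fun _ => (1:ℝ)) = iteratedDeriv 2 f 0 := rfl
  have hit : iteratedDeriv 2 f = deriv (deriv f) := by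
    rw [iteratedDeriv_succ, iteratedDeriv_one]
  have : b 0 = 2 * c 2 := by
    rw [b, a, ← hit, ← hright, ← h, hleft]
  rw [this, c]
  norm_num [Nat.factorial]

end DetAAux

open DetAAux in
/-- With `α₁(r) = −J₀'(r)/r` and `α₂(r) = −J₀''(r)`, one has
`(α₁(r)² − 1/4)(α₂(r)² − 1/4) = 3r⁴/256 + O(r⁶)` as `r → 0`. -/
theorem detA_asymptotics :
    (fun r : ℝ =>
        ((-(deriv besselJ0 r) / r) ^ 2 - 1 / 4) * ((-(deriv (deriv besselJ0) r)) ^ 2 - 1 / 4)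
          - 3 * r ^ 4 / 256)
      =O[nhdsWithin 0 {(0 : ℝ)}ᶜ] (fun r => r ^ 6) := by
  -- basic O(1) facts
  have ha_cont : ContinuousAt a 0 := (hfa' 0 trivial).continuousAt
  have hb_cont : ContinuousAt b 0 := (hfa'' 0 trivial).continuousAt
  have ha1 : a =O[𝓝 (0:ℝ)] (fun _ => (1:ℝ)) := ha_cont.tendsto.isBigO_one (F := ℝ)
  have ht1 : (fun t : ℝ => t) =O[𝓝 (0:ℝ)] (fun _ => (1:ℝ)) :=
    (continuous_id.tendsto (0:ℝ)).isBigO_one (F := ℝ)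
  have ht2t : (fun t : ℝ => t ^ 2) =O[𝓝 (0:ℝ)] (fun t => t) := by
    have := ((isBigO_refl (fun t : ℝ => t) (𝓝 (0:ℝ))).mul ht1)
    exact this.congr (fun t => by ring) (fun t => by ring)
  -- second-order expansion of a at 0
  obtain ⟨q, hq⟩ := hfa' 0 trivial
  have hE1 : (fun t : ℝ => a t - (-(1/4) + t/32)) =O[𝓝 (0:ℝ)] fun t => t ^ 2 := by
    have hps : ∀ y : ℝ, q.partialSum 2 y = -(1/4) + y/32 := by
      intro y
      have h0 : q 0 (fun _ => y) = -(1/4) := by rw [hq.coeff_zero]; exact a0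
      have hc1 : q.coeff 1 = 1/32 := by
        have hd := hq.deriv
        rw [FormalMultilinearSeries.coeff, show (1 : Fin 1 → ℝ) = fun _ => (1:ℝ) from rfl,
          ← hd]
        exact b0
      have h1 : q 1 (fun _ => y) = y * (1/32) := by
        rw [q.apply_eq_pow_smul_coeff, hc1, smul_eq_mul, pow_one]
      rw [FormalMultilinearSeries.partialSum, Finset.sum_range_succ, Finset.sum_range_one,
        h0, h1]
      ring
    have h2 : (fun y : ℝ => a y - (-(1/4) + y/32)) =O[𝓝 (0:ℝ)] fun y => ‖y‖ ^ 2 :=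
      (hq.isBigO_sub_partialSum_pow 2).congr (fun y => by rw [zero_add, hps]) (fun y => rfl)
    have hnorm : (fun y : ℝ => ‖y‖ ^ 2) =O[𝓝 (0:ℝ)] fun y => y ^ 2 := by
      simpa [norm_pow] using (isBigO_refl (fun y : ℝ => y ^ 2) (𝓝 (0:ℝ))).norm_left
    exact h2.trans hnorm
  -- first-order expansion of b at 0
  have hE2 : (fun t : ℝ => b t - 1/32) =O[𝓝 (0:ℝ)] fun t => t := by
    have hd : DifferentiableAt ℝ b 0 := (hfa'' 0 trivial).differentiableAt
    exact hd.hasFDerivAt.isBigO_sub.congr (fun t => by rw [b0]) (fun t => by rw [sub_zero])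
  -- the two factors
  set A : ℝ → ℝ := fun t => 4 * (a t) ^ 2 - 1/4 with hAdef
  set B : ℝ → ℝ := fun t => (2 * a t + 4 * t * b t) ^ 2 - 1/4 with hBdef
  have hA : (fun t : ℝ => A t + t/16) =O[𝓝 (0:ℝ)] fun t => t ^ 2 := by
    have hid : (fun t : ℝ => A t + t/16)
        = fun t => (4 * (a t - (-(1/4) + t/32))) * (a t + (-(1/4) + t/32)) + (1/256) * t ^ 2 := by
      funext t; rw [hAdef]; ring
    rw [hid]
    refine IsBigO.add ?_ ((isBigO_refl (fun t : ℝ => t ^ 2) _).const_mul_left _)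
    have h1 : (fun t : ℝ => 4 * (a t - (-(1/4) + t/32))) =O[𝓝 (0:ℝ)] fun t => t ^ 2 :=
      hE1.const_mul_left 4
    have h2 : (fun t : ℝ => a t + (-(1/4) + t/32)) =O[𝓝 (0:ℝ)] fun _ => (1:ℝ) := by
      have hc : ContinuousAt (fun t : ℝ => a t + (-(1/4) + t/32)) 0 :=
        ha_cont.add (continuousAt_const.add (continuousAt_id.div_const 32))
      exact hc.tendsto.isBigO_one (F := ℝ)
    have := h1.mul h2
    exact this.congr (fun t => rfl) (fun t => by ring)
  have hB : (fun t : ℝ => B t + 3 * t/16) =O[𝓝 (0:ℝ)] fun t => t ^ 2 := by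
    have hid : (fun t : ℝ => B t + 3 * t/16)
        = fun t => (2 * (a t - (-(1/4) + t/32)) + t * (4 * (b t - 1/32)))
            * (2 * a t + 4 * t * b t + (-(1/2) + 3 * t/16)) + (9/256) * t ^ 2 := by
      funext t; rw [hBdef]; ring
    rw [hid]
    refine IsBigO.add ?_ ((isBigO_refl (fun t : ℝ => t ^ 2) _).const_mul_left _)
    have h1 : (fun t : ℝ => 2 * (a t - (-(1/4) + t/32)) + t * (4 * (b t - 1/32)))
        =O[𝓝 (0:ℝ)] fun t => t ^ 2 := by
      refine IsBigO.add (hE1.const_mul_left 2) ?_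
      have := (isBigO_refl (fun t : ℝ => t) (𝓝 (0:ℝ))).mul (hE2.const_mul_left 4)
      exact this.congr (fun t => rfl) (fun t => by ring)
    have h2 : (fun t : ℝ => 2 * a t + 4 * t * b t + (-(1/2) + 3 * t/16))
        =O[𝓝 (0:ℝ)] fun _ => (1:ℝ) := by
      have hc : ContinuousAt (fun t : ℝ => 2 * a t + 4 * t * b t + (-(1/2) + 3 * t/16)) 0 :=
        ((continuousAt_const.mul ha_cont).add
          ((continuousAt_const.mul continuousAt_id).mul hb_cont)).add
          (continuousAt_const.add ((continuousAt_const.mul continuousAt_id).div_const 16))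
      exact hc.tendsto.isBigO_one (F := ℝ)
    have := h1.mul h2
    exact this.congr (fun t => rfl) (fun t => by ring)
  have hBt : B =O[𝓝 (0:ℝ)] fun t => t := by
    have hid : B = fun t => (B t + 3 * t/16) + (-(3/16)) * t := by funext t; ring
    rw [hid]
    exact IsBigO.add (hB.trans ht2t) ((isBigO_refl (fun t : ℝ => t) _).const_mul_left _)
  -- the product expansion
  have hG : (fun t : ℝ => A t * B t - 3 * t ^ 2 / 256) =O[𝓝 (0:ℝ)] fun t => t ^ 3 := by
    have hid : (fun t : ℝ => A t * B t - 3 * t ^ 2 / 256)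
        = fun t => (A t + t/16) * B t + (-(1/16) * t) * (B t + 3 * t/16) := by
      funext t; ring
    rw [hid]
    refine IsBigO.add ?_ ?_
    · exact (hA.mul hBt).congr (fun t => rfl) (fun t => by ring)
    · have h1 : (fun t : ℝ => -(1/16) * t) =O[𝓝 (0:ℝ)] fun t => t :=
        (isBigO_refl (fun t : ℝ => t) _).const_mul_left _
      exact (h1.mul hB).congr (fun t => rfl) (fun t => by ring)
  -- compose with r ↦ r²
  have htr : Tendsto (fun r : ℝ => r ^ 2) (nhdsWithin 0 {(0:ℝ)}ᶜ) (𝓝 (0:ℝ)) := by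
    have : Tendsto (fun r : ℝ => r ^ 2) (𝓝 0) (𝓝 (0:ℝ)) := by
      simpa using (continuous_pow 2).tendsto (0:ℝ)
    exact this.mono_left nhdsWithin_le_nhds
  have hcomp := hG.comp_tendsto htr
  refine (hcomp.congr' ?_ ?_)
  · filter_upwards [self_mem_nhdsWithin] with r hr
    have hr' : r ≠ 0 := hr
    simp only [Function.comp_apply]
    rw [hJ0deriv2, hJ0deriv, hAdef, hBdef]
    simp only []
    field_simp
    ring
  · filter_upwards with r
    show (r ^ 2) ^ 3 = r ^ 6
    ring
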